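/- If f(τ), g(τ) ∈ \bar{F}_q{τ} are nonzero with ker φ_f = ker φ_g and f is not left-divisible by τ (i.e., f has nonzero constant coefficient) and both are monic, then there exists m ∈ ℕ with g(τ) = c τ^m f(τ) for some c ∈ \bar{F}_q^× (and g = τ^m f after normalizing leading coefficients). -/

import Mathlib

open Polynomial Finset

section Helpers

variable {K : Type*} [Field K] [IsAlgClosed K]

/-- The polynomial attached to an additive polynomial's coefficients. -/
private noncomputable def addPoly (q : ℕ) (d : ℕ → K) (n : ℕ) : K[X] :=
  ∑ i ∈ Finset.range (n + 1), C (d i) * X ^ q ^ i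

private lemma addPoly_eval (q : ℕ) (d : ℕ → K) (n : ℕ) (x : K) :
    (addPoly q d n).eval x = ∑ i ∈ Finset.range (n + 1), d i * x ^ q ^ i := by
  simp [addPoly, eval_finset_sum]

private lemma addPoly_coeff {q : ℕ} (hq : 2 ≤ q) (d : ℕ → K) (n : ℕ) {j : ℕ} (hj : j ≤ n) :
    (addPoly q d n).coeff (q ^ j) = d j := by
  rw [addPoly, finset_sum_coeff, Finset.sum_eq_single j]
  · simp
  · intro i _ hij
    have : q ^ j ≠ q ^ i := fun h => hij (Nat.pow_right_injective hq h.symm)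
    simp [coeff_X_pow, this]
  · intro h
    exact absurd (Finset.mem_range.mpr (Nat.lt_succ_of_le hj)) h

private lemma addPoly_natDegree_le {q : ℕ} (hq : 2 ≤ q) (d : ℕ → K) (n : ℕ) :
    (addPoly q d n).natDegree ≤ q ^ n := by
  refine natDegree_sum_le_of_forall_le _ _ fun i hi => ?_
  refine (natDegree_C_mul_X_pow_le _ _).trans ?_
  exact Nat.pow_le_pow_right (by omega) (Nat.lt_succ_iff.mp (Finset.mem_range.mp hi))

private lemma addPoly_monic {q : ℕ} (hq : 2 ≤ q) {d : ℕ → K} {n : ℕ} (hd : d n = 1) :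
    (addPoly q d n).Monic :=
  monic_of_natDegree_le_of_coeff_eq_one _ (addPoly_natDegree_le hq d n)
    (by rw [addPoly_coeff hq d n le_rfl, hd])

private lemma addPoly_natDegree {q : ℕ} (hq : 2 ≤ q) {d : ℕ → K} {n : ℕ} (hd : d n = 1) :
    (addPoly q d n).natDegree = q ^ n := by
  refine le_antisymm (addPoly_natDegree_le hq d n) ?_
  refine le_natDegree_of_ne_zero ?_
  rw [addPoly_coeff hq d n le_rfl, hd]
  exact one_ne_zero

private lemma addPoly_derivative {q : ℕ} (hq : 2 ≤ q) (hq0 : (q : K) = 0)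
    (d : ℕ → K) (n : ℕ) :
    derivative (addPoly q d n) = C (d 0) := by
  rw [addPoly, map_sum, Finset.sum_range_succ']
  have h0 : derivative (C (d 0) * X ^ q ^ 0) = C (d 0) := by
    simp
  rw [h0]
  have : ∀ i ∈ Finset.range n, derivative (C (d (i + 1)) * X ^ q ^ (i + 1)) = 0 := by
    intro i _
    rw [derivative_C_mul, derivative_X_pow]
    have : ((q ^ (i + 1) : ℕ) : K) = 0 := by
      push_cast
      rw [hq0]
      exact zero_pow (by omega)
    rw [this]
    simp
  rw [Finset.sum_congr rfl this]
  simp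

private lemma addPoly_separable {q : ℕ} (hq : 2 ≤ q) (hq0 : (q : K) = 0)
    {d : ℕ → K} (n : ℕ) (h0 : d 0 ≠ 0) :
    (addPoly q d n).Separable := by
  rw [Polynomial.Separable, addPoly_derivative hq hq0 d n]
  exact ⟨0, C (d 0)⁻¹, by simp [← C_mul, inv_mul_cancel₀ h0]⟩

/-- Two separable monic additive polynomials with the same root set are equal. -/
private lemma addPoly_uniq {q : ℕ} (hq : 2 ≤ q) (hq0 : (q : K) = 0)
    {d₁ d₂ : ℕ → K} {n₁ n₂ : ℕ}
    (h₁top : d₁ n₁ = 1) (h₂top : d₂ n₂ = 1) (h₁0 : d₁ 0 ≠ 0) (h₂0 : d₂ 0 ≠ 0)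
    (hroots : ∀ x : K, eval x (addPoly q d₁ n₁) = 0 ↔ eval x (addPoly q d₂ n₂) = 0) :
    n₁ = n₂ ∧ addPoly q d₁ n₁ = addPoly q d₂ n₂ := by
  classical
  set P₁ := addPoly q d₁ n₁ with hP₁
  set P₂ := addPoly q d₂ n₂ with hP₂
  have hm₁ : P₁.Monic := addPoly_monic hq h₁top
  have hm₂ : P₂.Monic := addPoly_monic hq h₂top
  have hs₁ : P₁.Separable := addPoly_separable hq hq0 n₁ h₁0
  have hs₂ : P₂.Separable := addPoly_separable hq hq0 n₂ h₂0
  have hsp₁ : P₁.Splits := IsAlgClosed.splits P₁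
  have hsp₂ : P₂.Splits := IsAlgClosed.splits P₂
  have hn₁ : Multiset.card P₁.roots = q ^ n₁ := by
    rw [splits_iff_card_roots.mp hsp₁, addPoly_natDegree hq h₁top]
  have hn₂ : Multiset.card P₂.roots = q ^ n₂ := by
    rw [splits_iff_card_roots.mp hsp₂, addPoly_natDegree hq h₂top]
  have hroots_eq : P₁.roots = P₂.roots := by
    have hnd₁ := nodup_roots hs₁
    have hnd₂ := nodup_roots hs₂
    have hfin : P₁.roots.toFinset = P₂.roots.toFinset := by
      ext x
      simp only [Multiset.mem_toFinset, mem_roots hm₁.ne_zero, mem_roots hm₂.ne_zero,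
        IsRoot.def]
      exact hroots x
    calc P₁.roots = P₁.roots.toFinset.val := by
            rw [Multiset.toFinset_val, Multiset.dedup_eq_self.mpr hnd₁]
      _ = P₂.roots.toFinset.val := by rw [hfin]
      _ = P₂.roots := by rw [Multiset.toFinset_val, Multiset.dedup_eq_self.mpr hnd₂]
  have hn : n₁ = n₂ := by
    have h : q ^ n₁ = q ^ n₂ := by rw [← hn₁, ← hn₂, hroots_eq]
    exact Nat.pow_right_injective hq h
  refine ⟨hn, ?_⟩
  rw [hsp₁.eq_prod_roots_of_monic hm₁,
    hsp₂.eq_prod_roots_of_monic hm₂, hroots_eq]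

end Helpers

/-- If `f, g` are nonzero monic skew polynomials over `\bar{F}_q` with
`ker φ_f = ker φ_g` and `f` not left-divisible by `τ` (nonzero constant coefficient), then
`g = τ^m f` for some `m ∈ ℕ`; on coefficients (with `τ^m Σ a_i τ^i = Σ a_i^{q^m} τ^{i+m}`) this
says `g` has coefficients `b_{m+i} = a_i^{q^m}` and `b_j = 0` for `j < m`. -/
theorem same_kernel_implies_tau_power_multiple
    (Fq : Type) [Field Fq] [Fintype Fq] (q : ℕ) (hq : q = Fintype.card Fq)
    (nf ng : ℕ) (a b : ℕ → AlgebraicClosure Fq)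
    (ha_supp : ∀ i, nf < i → a i = 0) (hb_supp : ∀ i, ng < i → b i = 0)
    (ha_monic : a nf = 1) (hb_monic : b ng = 1)
    (ha0 : a 0 ≠ 0)
    (hker : {x : AlgebraicClosure Fq | ∑ i ∈ Finset.range (nf + 1), a i * x ^ q ^ i = 0} =
            {x : AlgebraicClosure Fq | ∑ i ∈ Finset.range (ng + 1), b i * x ^ q ^ i = 0}) :
    ∃ m : ℕ, (∀ j, j < m → b j = 0) ∧ ∀ i, b (m + i) = a i ^ q ^ m := by
  classical
  -- basic facts about q
  obtain ⟨p, hpchar⟩ := CharP.exists Fq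
  have hp' : Nat.Prime p := by
    have := Fintype.one_lt_card (α := Fq)
    exact (CharP.char_is_prime Fq p)
  haveI : Fact p.Prime := ⟨hp'⟩
  obtain ⟨k, -, hcard⟩ := FiniteField.card Fq p
  have hqpk : q = p ^ (k : ℕ) := by rw [hq, hcard]
  have hq2 : 2 ≤ q := by rw [hq]; exact Fintype.one_lt_card
  haveI : CharP (AlgebraicClosure Fq) p := inferInstance
  have hq0 : (q : AlgebraicClosure Fq) = 0 := by
    rw [hqpk]
    push_cast
    rw [CharP.cast_eq_zero (AlgebraicClosure Fq) p]
    exact zero_pow (by positivity)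
  -- m : first nonzero coefficient of b
  have hbex : ∃ j, b j ≠ 0 := ⟨ng, by rw [hb_monic]; exact one_ne_zero⟩
  set m := Nat.find hbex with hm
  have hbm : b m ≠ 0 := Nat.find_spec hbex
  have hblt : ∀ j, j < m → b j = 0 := fun j hj => by
    by_contra h
    exact absurd hj (not_lt.mpr (Nat.find_le h))
  have hmng : m ≤ ng := le_of_not_gt fun h => hbm (hb_supp m h)
  -- the q^m-th power map and its inverse
  set σ := iterateFrobeniusEquiv (AlgebraicClosure Fq) p ((k : ℕ) * m) with hσ
  have hσ_apply : ∀ x : AlgebraicClosure Fq, σ x = x ^ q ^ m := by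
    intro x
    rw [hσ, iterateFrobeniusEquiv_def, hqpk, ← pow_mul]
  set c : ℕ → AlgebraicClosure Fq := fun i => σ.symm (b (m + i)) with hc
  have hcpow : ∀ i, c i ^ q ^ m = b (m + i) := fun i => by
    rw [← hσ_apply]; exact σ.apply_symm_apply _
  have hc0 : c 0 ≠ 0 := by
    intro h
    apply hbm
    have := hcpow 0
    rw [h, zero_pow (by positivity)] at this
    simpa using this.symm
  have hctop : c (ng - m) = 1 := by
    have : σ.symm 1 = 1 := map_one σ.symm
    rw [hc]
    simp only
    rw [show m + (ng - m) = ng by omega, hb_monic, this]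
  have hcsupp : ∀ i, ng - m < i → c i = 0 := by
    intro i hi
    rw [hc]
    simp only
    rw [hb_supp (m + i) (by omega), map_zero]
  -- G(x) = H(x)^{q^m}
  have hGH : ∀ x : AlgebraicClosure Fq, ∑ j ∈ Finset.range (ng + 1), b j * x ^ q ^ j
      = (∑ i ∈ Finset.range (ng - m + 1), c i * x ^ q ^ i) ^ q ^ m := by
    intro x
    have hring : (∑ i ∈ Finset.range (ng - m + 1), c i * x ^ q ^ i) ^ q ^ m
        = ∑ i ∈ Finset.range (ng - m + 1), (c i * x ^ q ^ i) ^ q ^ m := by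
      have : ∀ y : AlgebraicClosure Fq, y ^ q ^ m = iterateFrobenius (AlgebraicClosure Fq) p ((k : ℕ) * m) y := by
        intro y
        rw [iterateFrobenius_def, hqpk, ← pow_mul]
      rw [this, map_sum]
      exact Finset.sum_congr rfl fun i _ => (this _).symm
    rw [hring]
    have hsplit : ∑ j ∈ Finset.range (ng + 1), b j * x ^ q ^ j
        = ∑ i ∈ Finset.range (ng - m + 1), b (m + i) * x ^ q ^ (m + i) := by
      rw [show ng + 1 = m + (ng - m + 1) by omega]
      rw [Finset.sum_range_add]
      rw [Finset.sum_eq_zero fun j hj => by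
        rw [hblt j (Finset.mem_range.mp hj), zero_mul]]
      rw [zero_add]
    rw [hsplit]
    refine Finset.sum_congr rfl fun i _ => ?_
    have hexp : q ^ (m + i) = q ^ i * q ^ m := by rw [← pow_add, add_comm]
    rw [mul_pow, ← hcpow i, ← pow_mul, hexp]
  -- same kernel for addPoly a nf and addPoly c (ng - m)
  have hker' : ∀ x : AlgebraicClosure Fq, eval x (addPoly q a nf) = 0 ↔ eval x (addPoly q c (ng - m)) = 0 := by
    intro x
    rw [addPoly_eval, addPoly_eval]
    have h1 : (∑ i ∈ Finset.range (nf + 1), a i * x ^ q ^ i = 0)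
        ↔ (∑ i ∈ Finset.range (ng + 1), b i * x ^ q ^ i = 0) := by
      constructor
      · intro h; have := Set.ext_iff.mp hker x; exact this.mp h
      · intro h; have := Set.ext_iff.mp hker x; exact this.mpr h
    rw [h1, hGH x]
    exact pow_eq_zero_iff (by positivity)
  obtain ⟨hn, hPeq⟩ := addPoly_uniq hq2 hq0 ha_monic hctop ha0 hc0 hker'
  -- conclude
  have hac : ∀ i, i ≤ nf → a i = c i := by
    intro i hi
    have := congrArg (fun P => Polynomial.coeff P (q ^ i)) hPeq
    simpa [addPoly_coeff hq2 a nf hi, addPoly_coeff hq2 c (ng - m) (hn ▸ hi)] using this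
  refine ⟨m, hblt, fun i => ?_⟩
  by_cases hi : i ≤ nf
  · rw [← hcpow i, hac i hi]
  · rw [hb_supp (m + i) (by omega), ha_supp i (by omega), zero_pow (by positivity)]
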